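/- If the initial energy is negative, i.e. 2φ′(0)² + c(φ(0)⁴ − 2φ(0)²) < 0, then φ does not tend to 0 as t → +∞; consequently either φ(t) → 1 or φ(t) → −1 as t → +∞. -/

import Mathlib

open Filter
open Set

lemma lip_of_deriv (h h' : ℝ → ℝ) (C : ℝ)
    (hd : ∀ t, (0:ℝ) ≤ t → HasDerivAt h (h' t) t)
    (hb : ∀ t, (0:ℝ) ≤ t → |h' t| ≤ C) :
    ∀ x, (0:ℝ) ≤ x → ∀ y, (0:ℝ) ≤ y → |h x - h y| ≤ C * |x - y| := by
  intro x hx y hy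
  have := Convex.norm_image_sub_le_of_norm_hasDerivWithin_le
    (f := h) (f' := h') (s := Ici (0:ℝ))
    (fun z hz => (hd z hz).hasDerivWithinAt) (fun z hz => hb z hz) (convex_Ici 0) hy hx
  simpa [Real.norm_eq_abs] using this

lemma barb_aux (f g : ℝ → ℝ) (T δ c : ℝ) (hδ : 0 ≤ δ)
    (hd : ∀ s ∈ Icc T (T + δ), HasDerivAt f (g s) s)
    (hg : ∀ s ∈ Icc T (T + δ), c ≤ g s) :
    c * δ ≤ f (T + δ) - f T := by
  have hder : ∀ s ∈ Icc T (T + δ), HasDerivAt (fun s => f s - c * s) (g s - c) s := by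
    intro s hs
    exact (hd s hs).sub ((hasDerivAt_id s).const_mul c |>.congr_deriv (by ring))
  have key : MonotoneOn (fun s => f s - c * s) (Icc T (T + δ)) := by
    apply monotoneOn_of_deriv_nonneg (convex_Icc _ _)
    · exact fun s hs => ((hder s hs).continuousAt).continuousWithinAt
    · intro s hs
      have hs' : s ∈ Icc T (T + δ) := interior_subset hs
      exact (hder s hs').differentiableAt.differentiableWithinAt
    · intro s hs
      have hs' : s ∈ Icc T (T + δ) := interior_subset hs
      rw [(hder s hs').deriv]
      have := hg s hs'
      linarith
  have h1 : T ∈ Icc T (T + δ) := ⟨le_refl T, by linarith⟩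
  have h2 : T + δ ∈ Icc T (T + δ) := ⟨by linarith, le_refl _⟩
  have := key h1 h2 (by linarith)
  simp only at this
  linarith

lemma barbalat (f g : ℝ → ℝ) (M L : ℝ)
    (hd : ∀ t, (0:ℝ) ≤ t → HasDerivAt f (g t) t)
    (hLip : ∀ x, (0:ℝ) ≤ x → ∀ y, (0:ℝ) ≤ y → |g x - g y| ≤ M * |x - y|)
    (hlim : Tendsto f atTop (nhds L)) :
    Tendsto g atTop (nhds 0) := by
  have hM0 : 0 ≤ M := by
    by_contra h
    push_neg at h
    have h1 := hLip 0 le_rfl 1 zero_le_one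
    have h2 := abs_nonneg (g 0 - g 1)
    have : |(0:ℝ) - 1| = 1 := by norm_num
    rw [this] at h1
    linarith
  rw [Metric.tendsto_atTop]
  intro ε hε
  have hM1 : (0:ℝ) < M + 1 := by linarith
  set ε' := ε ^ 2 / (16 * (M + 1)) with hε'def
  have hε' : 0 < ε' := by positivity
  obtain ⟨N, hN⟩ := (Metric.tendsto_atTop.mp hlim) ε' hε'
  refine ⟨max N 0, fun t ht => ?_⟩
  have htN : N ≤ t := le_trans (le_max_left _ _) ht
  have ht0 : (0:ℝ) ≤ t := le_trans (le_max_right _ _) ht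
  rw [Real.dist_eq, sub_zero]
  by_contra hcon
  push_neg at hcon
  set δ := ε / (2 * (M + 1)) with hδdef
  have hδ : 0 < δ := by positivity
  have hMδ : M * δ ≤ ε / 2 := by
    have e : ε / (2 * (M + 1)) * (M + 1) = ε / 2 := by field_simp
    nlinarith [hδ.le, e]
  have hdist : |f (t + δ) - f t| < 2 * ε' := by
    have d1 := hN t htN
    have d2 := hN (t + δ) (by linarith)
    rw [Real.dist_eq] at d1 d2
    have : f (t + δ) - f t = (f (t + δ) - L) - (f t - L) := by ring
    rw [this]
    calc |(f (t + δ) - L) - (f t - L)| ≤ |f (t + δ) - L| + |f t - L| := abs_sub _ _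
      _ < 2 * ε' := by linarith
  have hgs : ∀ s ∈ Icc t (t + δ), |g s - g t| ≤ ε / 2 := by
    intro s hs
    have hs0 : (0:ℝ) ≤ s := le_trans ht0 hs.1
    have := hLip s hs0 t ht0
    have habs : |s - t| ≤ δ := by
      rw [abs_of_nonneg (by linarith [hs.1])]
      linarith [hs.2]
    calc |g s - g t| ≤ M * |s - t| := this
      _ ≤ M * δ := by nlinarith [abs_nonneg (s - t)]
      _ ≤ ε / 2 := hMδ
  rcases le_abs.mp hcon with hpos | hneg
  · -- g t ≥ ε
    have key := barb_aux f g t δ (ε / 2) hδ.le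
      (fun s hs => hd s (le_trans ht0 hs.1))
      (fun s hs => by
        have := hgs s hs
        have := abs_le.mp this
        linarith [this.1])
    have : ε / 2 * δ ≤ |f (t + δ) - f t| := le_trans key (le_abs_self _)
    have e2 : ε / 2 * δ = 4 * ε' := by rw [hδdef, hε'def]; field_simp; ring
    linarith [hε', this, hdist, e2]
  · -- g t ≤ -ε
    have key := barb_aux (fun s => -f s) (fun s => -g s) t δ (ε / 2) hδ.le
      (fun s hs => (hd s (le_trans ht0 hs.1)).neg)
      (fun s hs => by
        have := hgs s hs
        have := abs_le.mp this
        linarith [this.2])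
    have : ε / 2 * δ ≤ |f (t + δ) - f t| := by
      refine le_trans key ?_
      rw [← abs_neg]
      have : -(f (t + δ) - f t) = -f (t + δ) - -f t := by ring
      rw [← this]
      exact le_abs_self _
    have e2 : ε / 2 * δ = 4 * ε' := by rw [hδdef, hε'def]; field_simp; ring
    linarith [hε', this, hdist, e2]


set_option maxHeartbeats 2000000

/-- If the initial energy of a solution of the damped Duffing equation is negative,
i.e. `2 φ'(0)² + c (φ(0)⁴ − 2 φ(0)²) < 0`, then `φ` does not tend to `0` as `t → +∞`;
consequently either `φ(t) → 1` or `φ(t) → −1` as `t → +∞`. -/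
theorem duffing_nontrivial_limit (k c : ℝ) (hk : 0 < k) (hc : 0 < c)
    (φ : ℝ → ℝ) (hφ : Differentiable ℝ φ) (hφ' : Differentiable ℝ (deriv φ))
    (hode : ∀ t : ℝ, 0 ≤ t →
      deriv (deriv φ) t + k * deriv φ t + c * ((φ t) ^ 3 - φ t) = 0)
    (hneg : 2 * (deriv φ 0) ^ 2 + c * ((φ 0) ^ 4 - 2 * (φ 0) ^ 2) < 0) :
    ¬ Tendsto φ atTop (nhds 0) ∧
      (Tendsto φ atTop (nhds 1) ∨ Tendsto φ atTop (nhds (-1))) := by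
  set v := deriv φ with hvdef
  set a := deriv (deriv φ) with hadef
  have hvd : ∀ t, HasDerivAt φ (v t) t := fun t => (hφ t).hasDerivAt
  have had : ∀ t, HasDerivAt v (a t) t := fun t => (hφ' t).hasDerivAt
  have hφc : Continuous φ := hφ.continuous
  set E : ℝ → ℝ := fun t => 1/2 * (v t)^2 + c * ((φ t)^4/4 - (φ t)^2/2) with hEdef
  clear_value E
  -- derivative of E
  have hEd : ∀ t, (0:ℝ) ≤ t → HasDerivAt E (-k * (v t)^2) t := by
    intro t ht
    rw [hEdef]
    have h1 : HasDerivAt (fun s => 1/2 * (v s)^2) (1/2 * (2 * v t ^ 1 * a t)) t :=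
      ((had t).pow 2).const_mul (1/2)
    have h2 : HasDerivAt (fun s => (φ s)^4/4 - (φ s)^2/2)
        ((4 * φ t ^ 3 * v t)/4 - (2 * φ t ^ 1 * v t)/2) t :=
      (((hvd t).pow 4).div_const 4).sub (((hvd t).pow 2).div_const 2)
    have h3 := h1.add (h2.const_mul c)
    have h0 := hode t ht
    refine h3.congr_deriv ?_
    linear_combination (v t) * h0
  -- E antitone on [0, ∞)
  have hEanti : AntitoneOn E (Ici (0:ℝ)) := by
    apply antitoneOn_of_deriv_nonpos (convex_Ici 0)
    · exact fun s hs => ((hEd s hs).continuousAt).continuousWithinAt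
    · intro s hs
      rw [interior_Ici] at hs
      exact (hEd s hs.le).differentiableAt.differentiableWithinAt
    · intro s hs
      rw [interior_Ici] at hs
      rw [(hEd s hs.le).deriv]
      nlinarith [sq_nonneg (v s)]
  have hEle : ∀ t, (0:ℝ) ≤ t → E t ≤ E 0 :=
    fun t ht => hEanti (self_mem_Ici) ht ht
  have hE0 : E 0 < 0 := by
    simp only [hEdef]
    linarith
  -- pointwise bounds for t ≥ 0
  have hVle : ∀ t, (0:ℝ) ≤ t → c * ((φ t)^4/4 - (φ t)^2/2) ≤ E 0 := by
    intro t ht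
    have := hEle t ht
    simp only [hEdef] at this ⊢
    nlinarith [sq_nonneg (v t)]
  have hφsq2 : ∀ t, (0:ℝ) ≤ t → (φ t)^2 ≤ 2 := by
    intro t ht
    by_contra hgt
    push_neg at hgt
    have h := hVle t ht
    nlinarith [hE0, mul_pos hc (mul_pos (show (0:ℝ) < (φ t)^2 by nlinarith) (show (0:ℝ) < (φ t)^2 - 2 by linarith))]
  have hφb : ∀ t, (0:ℝ) ≤ t → |φ t| ≤ 2 := by
    intro t ht
    have := hφsq2 t ht
    rw [abs_le]
    constructor <;> nlinarith
  set δ := -(2 * E 0) / c with hδdef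
  clear_value δ
  have hδpos : 0 < δ := by
    rw [hδdef]
    apply div_pos (by linarith) hc
  have hφlow : ∀ t, (0:ℝ) ≤ t → δ ≤ (φ t)^2 := by
    intro t ht
    have h := hVle t ht
    have h2 := hφsq2 t ht
    rw [hδdef, div_le_iff₀ hc]
    have h3 : 0 ≤ c * ((φ t)^2 * (φ t)^2) := mul_nonneg hc.le (mul_nonneg (sq_nonneg _) (sq_nonneg _))
    nlinarith [h3]
  -- velocity bound
  set Cv := 1 + c/2 with hCvdef
  clear_value Cv
  have hCv : 0 < Cv := by rw [hCvdef]; positivity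
  have hvsq : ∀ t, (0:ℝ) ≤ t → (v t)^2 ≤ c/2 := by
    intro t ht
    have h1 := hEle t ht
    simp only [hEdef] at h1
    nlinarith [sq_nonneg ((φ t)^2 - 1), hE0]
  have hvb : ∀ t, (0:ℝ) ≤ t → |v t| ≤ Cv := by
    intro t ht
    have h := hvsq t ht
    rw [hCvdef, abs_le]
    constructor <;> nlinarith [sq_nonneg (v t - 1), sq_nonneg (v t + 1), hc.le]
  -- acceleration bound
  set Ca := k * Cv + 10 * c with hCadef
  clear_value Ca
  have hCa : 0 < Ca := by rw [hCadef]; positivity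
  have hab : ∀ t, (0:ℝ) ≤ t → |a t| ≤ Ca := by
    intro t ht
    have h0 := hode t ht
    have e : a t = -(k * v t) - c * ((φ t)^3 - φ t) := by linarith
    rw [e, hCadef]
    have h1 := hvb t ht
    have h2 := abs_le.mp (hφb t ht)
    have hcub : |(φ t)^3 - φ t| ≤ 10 := by
      rw [abs_le]
      constructor <;> nlinarith [h2.1, h2.2, sq_nonneg (φ t + 1), sq_nonneg (φ t - 1)]
    calc |(-(k * v t)) - c * ((φ t)^3 - φ t)|
        ≤ |(-(k * v t))| + |c * ((φ t)^3 - φ t)| := abs_sub _ _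
      _ = k * |v t| + c * |(φ t)^3 - φ t| := by
          rw [abs_neg, abs_mul, abs_mul, abs_of_pos hk, abs_of_pos hc]
      _ ≤ k * Cv + 10 * c := by
          nlinarith [mul_le_mul_of_nonneg_left h1 hk.le, mul_le_mul_of_nonneg_left hcub hc.le]
  -- Lipschitz bounds
  have hvlip := lip_of_deriv v a Ca (fun t _ => had t) hab
  have hφlip := lip_of_deriv φ v Cv (fun t _ => hvd t) hvb
  -- E converges
  have hEbdd : ∀ t, -(c/4) ≤ E t := by
    intro t
    simp only [hEdef]
    nlinarith [sq_nonneg (v t), sq_nonneg ((φ t)^2 - 1)]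
  set F : ℝ → ℝ := fun t => E (max t 0) with hFdef
  have hFanti : Antitone F := by
    intro s t hst
    exact hEanti (le_max_right s 0) (le_max_right t 0) (max_le_max hst le_rfl)
  have hFbdd : BddBelow (range F) := by
    refine ⟨-(c/4), ?_⟩
    rintro x ⟨t, rfl⟩
    exact hEbdd _
  have hFlim := tendsto_atTop_ciInf hFanti hFbdd
  have hElim : Tendsto E atTop (nhds (⨅ t, F t)) := by
    refine hFlim.congr' ?_
    filter_upwards [eventually_ge_atTop (0:ℝ)] with t ht
    simp [hFdef, max_eq_left ht]
  -- first Barbalat: v² → 0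
  have hg1lip : ∀ x, (0:ℝ) ≤ x → ∀ y, (0:ℝ) ≤ y →
      |(-k * (v x)^2) - (-k * (v y)^2)| ≤ (2 * k * Cv * Ca) * |x - y| := by
    intro x hx y hy
    have e : -k * (v x)^2 - (-k * (v y)^2) = -k * ((v x + v y) * (v x - v y)) := by ring
    rw [e, abs_mul, abs_mul, abs_neg, abs_of_pos hk]
    have h1 := hvlip x hx y hy
    have h2 := hvb x hx
    have h3 := hvb y hy
    have h4 : |v x + v y| ≤ 2 * Cv := by
      calc |v x + v y| ≤ |v x| + |v y| := abs_add_le _ _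
        _ ≤ 2 * Cv := by linarith
    have h5 := abs_nonneg (v x - v y)
    have h7 := abs_nonneg (x - y)
    have h8 : |v x + v y| * |v x - v y| ≤ (2 * Cv) * (Ca * |x - y|) :=
      mul_le_mul h4 h1 h5 (by positivity)
    nlinarith [mul_le_mul_of_nonneg_left h8 hk.le]
  have hv2lim : Tendsto (fun t => -k * (v t)^2) atTop (nhds 0) :=
    barbalat E (fun t => -k * (v t)^2) (2 * k * Cv * Ca) (⨅ t, F t) hEd hg1lip hElim
  have hvsqlim : Tendsto (fun t => (v t)^2) atTop (nhds 0) := by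
    have := hv2lim.const_mul (-1/k)
    simp only [mul_zero] at this
    refine this.congr ?_
    intro t
    field_simp
  have hvlim : Tendsto v atTop (nhds 0) := by
    have habsv : Tendsto (abs ∘ v) atTop (nhds 0) := by
      have h2 : Tendsto (fun t => Real.sqrt ((v t)^2)) atTop (nhds (Real.sqrt 0)) :=
        (Real.continuous_sqrt.tendsto 0).comp hvsqlim
      exact (by simpa [Function.comp, Real.sqrt_sq_eq_abs] using h2 : Tendsto (fun t => |v t|) atTop (nhds 0))
    exact (tendsto_zero_iff_abs_tendsto_zero v).mpr habsv
  -- second Barbalat: a → 0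
  have halip : ∀ x, (0:ℝ) ≤ x → ∀ y, (0:ℝ) ≤ y →
      |a x - a y| ≤ (k * Ca + 13 * c * Cv) * |x - y| := by
    intro x hx y hy
    have h0x := hode x hx
    have h0y := hode y hy
    have e : a x - a y = -(k * (v x - v y))
        - c * ((φ x - φ y) * ((φ x)^2 + φ x * φ y + (φ y)^2 - 1)) := by
      linear_combination h0x - h0y
    have h1 := hvlip x hx y hy
    have h2 := hφlip x hx y hy
    have h3 : |(φ x)^2 + φ x * φ y + (φ y)^2 - 1| ≤ 13 := by
      have hbx := abs_le.mp (hφb x hx)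
      have hby := abs_le.mp (hφb y hy)
      rw [abs_le]
      constructor <;> nlinarith [hbx.1, hbx.2, hby.1, hby.2]
    rw [e]
    calc |(-(k * (v x - v y))) - c * ((φ x - φ y) * ((φ x)^2 + φ x * φ y + (φ y)^2 - 1))|
        ≤ |(-(k * (v x - v y)))| + |c * ((φ x - φ y) * ((φ x)^2 + φ x * φ y + (φ y)^2 - 1))| :=
          abs_sub _ _
      _ = k * |v x - v y| + c * (|φ x - φ y| * |(φ x)^2 + φ x * φ y + (φ y)^2 - 1|) := by
          rw [abs_neg, abs_mul, abs_mul, abs_mul, abs_of_pos hk, abs_of_pos hc]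
      _ ≤ (k * Ca + 13 * c * Cv) * |x - y| := by
          have h6 := abs_nonneg (x - y)
          have h8 : |φ x - φ y| * |(φ x)^2 + φ x * φ y + (φ y)^2 - 1| ≤ (Cv * |x - y|) * 13 :=
            mul_le_mul h2 h3 (abs_nonneg _) (mul_nonneg hCv.le h6)
          nlinarith [mul_le_mul_of_nonneg_left h1 hk.le, mul_le_mul_of_nonneg_left h8 hc.le]
  have halim : Tendsto a atTop (nhds 0) :=
    barbalat v a (k * Ca + 13 * c * Cv) 0 (fun t _ => had t) halip hvlim
  -- φ³ - φ → 0
  have hcube : Tendsto (fun t => (φ t)^3 - φ t) atTop (nhds 0) := by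
    have h1 : Tendsto (fun t => (-(a t) - k * v t) / c) atTop (nhds 0) := by
      have := ((halim.neg).sub (hvlim.const_mul k)).div_const c
      simpa using this
    refine h1.congr' ?_
    filter_upwards [eventually_ge_atTop (0:ℝ)] with t ht
    have h0 := hode t ht
    field_simp
    linarith
  -- φ² → 1
  set s := Real.sqrt δ with hsdef
  clear_value s
  have hs : 0 < s := by rw [hsdef]; exact Real.sqrt_pos.mpr hδpos
  have hφabs : ∀ t, (0:ℝ) ≤ t → s ≤ |φ t| := by
    intro t ht
    have h2 := Real.sqrt_le_sqrt (hφlow t ht)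
    rw [Real.sqrt_sq_eq_abs] at h2
    rw [hsdef]
    exact h2
  have habs1 : Tendsto (fun t => |(φ t)^2 - 1|) atTop (nhds 0) := by
    apply squeeze_zero' (Filter.Eventually.of_forall (fun t => abs_nonneg _))
      (g := fun t => |(φ t)^3 - φ t| / s)
    · filter_upwards [eventually_ge_atTop (0:ℝ)] with t ht
      rw [le_div_iff₀ hs]
      have e : (φ t)^3 - φ t = φ t * ((φ t)^2 - 1) := by ring
      rw [e, abs_mul]
      have := hφabs t ht
      nlinarith [abs_nonneg ((φ t)^2 - 1)]
    · have := hcube.abs.div_const s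
      simpa using this
  have hsq1 : Tendsto (fun t => (φ t)^2) atTop (nhds 1) := by
    have h2 : Tendsto (fun t => (φ t)^2 - 1) atTop (nhds 0) :=
      (tendsto_zero_iff_abs_tendsto_zero (fun t => (φ t)^2 - 1)).mpr habs1
    have := h2.add_const 1
    simpa using this
  -- not tendsto 0
  have hnot0 : ¬ Tendsto φ atTop (nhds 0) := by
    intro h
    have h2 : Tendsto (fun t => (φ t)^2) atTop (nhds (0^2)) := h.pow 2
    have := tendsto_nhds_unique h2 hsq1
    norm_num at this
  refine ⟨hnot0, ?_⟩
  -- sign constancy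
  have hφ0ne : φ 0 ≠ 0 := by
    intro h
    have := hφlow 0 le_rfl
    rw [h] at this
    nlinarith
  have hsign : ∀ t, (0:ℝ) ≤ t → φ t ≠ 0 := by
    intro t ht h
    have := hφlow t ht
    rw [h] at this
    nlinarith
  rcases lt_or_gt_of_ne hφ0ne with hneg0 | hpos0
  · -- φ 0 < 0, show φ → -1
    right
    have hnegall : ∀ t, (0:ℝ) ≤ t → φ t < 0 := by
      intro t ht
      by_contra hle
      push_neg at hle
      have hlt : 0 < φ t := lt_of_le_of_ne hle (fun h => hsign t ht h.symm)
      have hsub := intermediate_value_Icc ht hφc.continuousOn (a := (0:ℝ)) (b := t)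
      have h0mem : (0:ℝ) ∈ Icc (φ 0) (φ t) := ⟨hneg0.le, hlt.le⟩
      obtain ⟨r, hr, hr0⟩ := hsub h0mem
      exact hsign r hr.1 hr0
    have habsf : Tendsto (fun t => |φ t - (-1)|) atTop (nhds 0) := by
      apply squeeze_zero' (Filter.Eventually.of_forall (fun t => abs_nonneg _))
        (g := fun t => |(φ t)^2 - 1|)
      · filter_upwards [eventually_ge_atTop (0:ℝ)] with t ht
        have h1 := hnegall t ht
        have e : (φ t)^2 - 1 = (φ t - (-1)) * (φ t - 1) := by ring
        rw [e, abs_mul, abs_of_neg (show φ t - 1 < 0 by linarith)]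
        nlinarith [abs_nonneg (φ t - (-1))]
      · exact habs1
    have := ((tendsto_zero_iff_abs_tendsto_zero (fun t => φ t - (-1))).mpr habsf).add_const (-1)
    simpa using this
  · -- φ 0 > 0, show φ → 1
    left
    have hposall : ∀ t, (0:ℝ) ≤ t → 0 < φ t := by
      intro t ht
      by_contra hle
      push_neg at hle
      have hlt : φ t < 0 := lt_of_le_of_ne hle (hsign t ht)
      have hsub := intermediate_value_Icc' ht hφc.continuousOn (a := (0:ℝ)) (b := t)
      have h0mem : (0:ℝ) ∈ Icc (φ t) (φ 0) := ⟨hlt.le, hpos0.le⟩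
      obtain ⟨r, hr, hr0⟩ := hsub h0mem
      exact hsign r hr.1 hr0
    have habsf : Tendsto (fun t => |φ t - 1|) atTop (nhds 0) := by
      apply squeeze_zero' (Filter.Eventually.of_forall (fun t => abs_nonneg _))
        (g := fun t => |(φ t)^2 - 1|)
      · filter_upwards [eventually_ge_atTop (0:ℝ)] with t ht
        have h1 := hposall t ht
        have e : (φ t)^2 - 1 = (φ t - 1) * (φ t + 1) := by ring
        rw [e, abs_mul, abs_of_pos (show (0:ℝ) < φ t + 1 by linarith)]
        nlinarith [abs_nonneg (φ t - 1)]
      · exact habs1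
    have := ((tendsto_zero_iff_abs_tendsto_zero (fun t => φ t - 1)).mpr habsf).add_const 1
    simpa using this
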